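/- Let C ≥ 1 and n > 0 be real numbers. Then for all x ∈ [0, nC], e^{(log(1+C)/C)·x} ≤ (1 + x/n)^n ≤ e^{x − ((C − log(1+C))/C²)·x²/n}. -/

import Mathlib

open Real Set

private lemma lemA (C t : ℝ) (hC : 1 ≤ C) (ht0 : 0 ≤ t) (htC : t ≤ C) :
    t * Real.log (1 + C) ≤ C * Real.log (1 + t) := by
  have hC0 : (0:ℝ) < C := lt_of_lt_of_le one_pos hC
  have ha : (0:ℝ) ≤ 1 - t / C := by
    have : t / C ≤ 1 := (div_le_one hC0).mpr htC
    linarith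
  have hb : (0:ℝ) ≤ t / C := div_nonneg ht0 hC0.le
  have hab : (1 - t / C) + t / C = 1 := by ring
  have h1 : (1:ℝ) ∈ Ioi (0:ℝ) := by norm_num
  have h2 : (1 + C) ∈ Ioi (0:ℝ) := by simp; linarith
  have key := strictConcaveOn_log_Ioi.concaveOn.2 h1 h2 ha hb hab
  simp only [smul_eq_mul, mul_one, Real.log_one, mul_zero, zero_add] at key
  have heq : 1 - t / C + t / C * (1 + C) = 1 + t := by
    field_simp; ring
  rw [heq] at key
  have h3 := mul_le_mul_of_nonneg_left key hC0.le
  calc t * Real.log (1 + C) = C * (t / C * Real.log (1 + C)) := by field_simp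
    _ ≤ C * Real.log (1 + t) := h3

private lemma lemB (C t : ℝ) (hC : 1 ≤ C) (ht0 : 0 ≤ t) (htC : t ≤ C) :
    (C - Real.log (1 + C)) * t ^ 2 ≤ C ^ 2 * (t - Real.log (1 + t)) := by
  have hC0 : (0:ℝ) < C := lt_of_lt_of_le one_pos hC
  set L := Real.log (1 + C) with hL
  set g := C - L with hg
  have hg0 : 0 ≤ g := by
    have h' := Real.log_lt_sub_one_of_pos (show (0:ℝ) < 1 + C by linarith)
      (show (1:ℝ) + C ≠ 1 by intro hco; nlinarith)
    rw [hg, hL]; linarith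
  set h : ℝ → ℝ := fun s => C ^ 2 * (s - Real.log (1 + s)) - s ^ 2 * g with hh
  have hderiv : ∀ s : ℝ, 0 ≤ s →
      HasDerivAt h (C ^ 2 * (1 - 1 / (1 + s)) - 2 * s * g) s := by
    intro s hs
    have hne : (1 + s) ≠ 0 := by linarith
    have hlog : HasDerivAt (fun y : ℝ => Real.log (1 + y)) (1 / (1 + s)) s := by
      have := ((hasDerivAt_id s).const_add 1).log hne
      simpa using this
    have h1 : HasDerivAt (fun y : ℝ => y - Real.log (1 + y)) (1 - 1 / (1 + s)) s :=
      (hasDerivAt_id s).sub hlog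
    have h2 : HasDerivAt (fun y : ℝ => y ^ 2 * g) (2 * s * g) s := by
      have := (hasDerivAt_pow 2 s).mul_const g
      simpa [mul_comm] using this
    exact (h1.const_mul (C ^ 2)).sub h2
  have hcont : ∀ a b : ℝ, 0 ≤ a → ContinuousOn h (Icc a b) := by
    intro a b ha
    apply ContinuousOn.sub
    · apply ContinuousOn.mul continuousOn_const
      apply ContinuousOn.sub continuousOn_id
      apply ContinuousOn.log (by fun_prop)
      intro y hy
      intro hcontra
      nlinarith [hy.1]
    · fun_prop
  have hfact : ∀ s : ℝ, 0 ≤ s →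
      C ^ 2 * (1 - 1 / (1 + s)) - 2 * s * g = s * (C ^ 2 - 2 * g * (1 + s)) / (1 + s) := by
    intro s hs
    have : (1:ℝ) + s ≠ 0 := by linarith
    field_simp; ring
  have hh0 : h 0 = 0 := by simp [hh]
  have hhC : h C = 0 := by simp [hh, hg, hL]
  have hht : 0 ≤ h t := by
    rcases le_or_gt (2 * g * (1 + t)) (C ^ 2) with hcase | hcase
    · have hmono : MonotoneOn h (Icc 0 t) := by
        apply monotoneOn_of_deriv_nonneg (convex_Icc 0 t) (hcont 0 t le_rfl)
        · intro s hs
          rw [interior_Icc] at hs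
          exact ((hderiv s hs.1.le).differentiableAt).differentiableWithinAt
        · intro s hs
          rw [interior_Icc] at hs
          have hs0 : 0 ≤ s := hs.1.le
          rw [(hderiv s hs0).deriv, hfact s hs0]
          apply div_nonneg _ (by linarith)
          apply mul_nonneg hs0
          nlinarith [hs.2]
      have := hmono (show (0:ℝ) ∈ Icc 0 t from ⟨le_rfl, ht0⟩)
        (show t ∈ Icc 0 t from ⟨ht0, le_rfl⟩) ht0
      linarith [hh0 ▸ this]
    · have hanti : AntitoneOn h (Icc t C) := by
        apply antitoneOn_of_deriv_nonpos (convex_Icc t C) (hcont t C ht0)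
        · intro s hs
          rw [interior_Icc] at hs
          exact ((hderiv s (le_trans ht0 hs.1.le)).differentiableAt).differentiableWithinAt
        · intro s hs
          rw [interior_Icc] at hs
          have hs0 : 0 ≤ s := le_trans ht0 hs.1.le
          rw [(hderiv s hs0).deriv, hfact s hs0]
          apply div_nonpos_of_nonpos_of_nonneg _ (by linarith)
          apply mul_nonpos_of_nonneg_of_nonpos hs0
          nlinarith [hs.1]
      have := hanti (show t ∈ Icc t C from ⟨le_rfl, htC⟩)
        (show C ∈ Icc t C from ⟨htC, le_rfl⟩) htC
      linarith [hhC ▸ this]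
  have hfinal : 0 ≤ C ^ 2 * (t - Real.log (1 + t)) - t ^ 2 * g := hht
  rw [hg, hL] at hfinal ⊢
  nlinarith [hfinal]

theorem exponential_inequalities (C n : ℝ) (hC : 1 ≤ C) (hn : 0 < n) :
    ∀ x ∈ Icc (0:ℝ) (n * C),
      Real.exp (Real.log (1 + C) / C * x) ≤ (1 + x / n) ^ n ∧
      (1 + x / n) ^ n ≤ Real.exp (x - (C - Real.log (1 + C)) / C ^ 2 * x ^ 2 / n) := by
  intro x hx
  have hC0 : (0:ℝ) < C := lt_of_lt_of_le one_pos hC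
  set t := x / n with htdef
  have ht0 : 0 ≤ t := div_nonneg hx.1 hn.le
  have htC : t ≤ C := by
    rw [htdef, div_le_iff₀ hn]
    linarith [hx.2]
  have hx_eq : x = n * t := by rw [htdef]; field_simp
  have hbase : (0:ℝ) < 1 + t := by linarith
  have hpow : (1 + x / n) ^ n = Real.exp (Real.log (1 + t) * n) := by
    rw [← htdef, Real.rpow_def_of_pos hbase]
  have hA := lemA C t hC ht0 htC
  have hB := lemB C t hC ht0 htC
  constructor
  · rw [hpow, Real.exp_le_exp, hx_eq]
    rw [div_mul_eq_mul_div, div_le_iff₀ hC0]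
    nlinarith [mul_le_mul_of_nonneg_left hA hn.le]
  · rw [hpow, Real.exp_le_exp, hx_eq]
    have hC2 : (0:ℝ) < C ^ 2 := by positivity
    have heq : (C - Real.log (1 + C)) / C ^ 2 * (n * t) ^ 2 / n
        = (C - Real.log (1 + C)) * (n * t ^ 2) / C ^ 2 := by
      field_simp
    rw [heq]
    have hD : (C - Real.log (1 + C)) * (n * t ^ 2) / C ^ 2
        ≤ n * t - Real.log (1 + t) * n := by
      rw [div_le_iff₀ hC2]
      nlinarith [mul_le_mul_of_nonneg_left hB hn.le]
    linarith
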